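/- Fix reals α, β with 0 ≤ α < 1 and β > 1. A word w : {1,…,n} → {0,…,ℓ} belongs to the language 𝓛 of Σ if and only if (a_1,…,a_{n−k+1}) ⪯ (w_k,…,w_n) ⪯ (b_1,…,b_{n−k+1}) for every k ∈ {1,…,n}, where ⪯ denotes the lexicographic order on finite words of equal length. -/

import Mathlib

noncomputable section

namespace IntermediateBeta

/-- The intermediate beta transformation `x ↦ βx + α mod 1`. -/
def F (α β : ℝ) (x : ℝ) : ℝ := Int.fract (β * x + α)

/-- The digit sequence of a point: `Om α β x n` is the index `i` with `F^[n] x ∈ J_i`.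
For `y ∈ [0,1)` we have `y ∈ J_i ↔ ⌊β y + α⌋ = i`. -/
def Om (α β : ℝ) (x : ℝ) : ℕ → ℕ := fun n => (⌊β * ((F α β)^[n] x) + α⌋).toNat

/-- `ℓ = ⌈α + β⌉ - 1`. -/
def ell (α β : ℝ) : ℕ := ⌈α + β⌉₊ - 1

/-- The subshift `Σ`: closure (in the product topology) of the set of digit sequences
of points of `[0,1)`. -/
def Sig (α β : ℝ) : Set (ℕ → ℕ) := closure (Om α β '' Set.Ico (0 : ℝ) 1)

/-- The shift map. -/
def shift (x : ℕ → ℕ) : ℕ → ℕ := fun n => x (n + 1)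

/-- Lexicographic order on one-sided sequences. -/
def lexLe (x y : ℕ → ℕ) : Prop := x = y ∨ ∃ k, (∀ i < k, x i = y i) ∧ x k < y k

/-- The language of a subset `S` of the full shift: the finite words occurring as
initial segments of elements of `S`. -/
def langOf (S : Set (ℕ → ℕ)) (w : List ℕ) : Prop :=
  ∃ x ∈ S, ∀ i : Fin w.length, x i = w.get i

/-- Membership in the language `𝓛` of the subshift `Σ`. -/
def inLang (α β : ℝ) (w : List ℕ) : Prop := langOf (Sig α β) w

/-- The tail segment of `w` of length `k` agrees with the initial segment of `s`
of length `k`. -/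
def tailAgrees (s : ℕ → ℕ) (w : List ℕ) (k : ℕ) : Prop :=
  k ≤ w.length ∧ ∀ i < k, w.getD (w.length - k + i) 0 = s i

/-- `kmax s w` is the length of the longest tail segment of `w` agreeing with an
initial segment of `s` (`k₁(w)` when `s = a`, `k₂(w)` when `s = b`). -/
def kmax (s : ℕ → ℕ) (w : List ℕ) : ℕ := sSup {k | tailAgrees s w k}

/-- `D a b` is the set of lengths `n` such that the initial segment of `b` of
length `n` occurs somewhere in `a`.  Thus `D a b` is the set `𝖣(a)` of the paper
and `D b a` is `𝖣(b)`. -/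
def D (a b : ℕ → ℕ) : Set ℕ := {n | ∃ j, ∀ i < n, b i = a (j + i)}

/-- Gluing of the words `w 0, v 0, w 1, v 1, …, v (n-1), w n`. -/
def glue {n : ℕ} (w : Fin (n + 1) → List ℕ) (v : Fin n → List ℕ) : List ℕ :=
  (List.ofFn fun i : Fin n => w i.castSucc ++ v i).flatten ++ w (Fin.last n)

/-- A collection `G` of words inside the language `lang` has specification: there
is `τ ∈ ℕ` such that any finite list of words of `G` can be glued, with gluing
words from `lang` of length `τ`, into a word of `lang`. -/
def HasSpec (lang G : List ℕ → Prop) : Prop :=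
  ∃ τ : ℕ, 1 ≤ τ ∧ ∀ n : ℕ, ∀ w : Fin (n + 1) → List ℕ, (∀ i, G (w i)) →
    ∃ v : Fin n → List ℕ, (∀ i, (v i).length = τ ∧ lang (v i)) ∧ lang (glue w v)

/-- The initial segment of a sequence, as a finite word. -/
def pre (s : ℕ → ℕ) (n : ℕ) : List ℕ := List.ofFn fun i : Fin n => s i

/-- Lexicographic order for finite words (of equal length). -/
def wordLe (u v : List ℕ) : Prop :=
  u = v ∨ ∃ k, (∀ i < k, u.getD i 0 = v.getD i 0) ∧ u.getD k 0 < v.getD k 0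

/-- Concatenation of a finite word with an infinite sequence. -/
def wcat (w : List ℕ) (x : ℕ → ℕ) : ℕ → ℕ := fun n =>
  if h : n < w.length then w.get ⟨n, h⟩ else x (n - w.length)

/-! ### Auxiliary: pointwise lexicographic comparison of sequences up to length `m` -/

def pLe (m : ℕ) (s t : ℕ → ℕ) : Prop :=
  (∀ i < m, s i = t i) ∨ ∃ j < m, (∀ i < j, s i = t i) ∧ s j < t j

lemma pLe_refl (m : ℕ) (s : ℕ → ℕ) : pLe m s s := Or.inl fun _ _ => rfl

lemma pLe_congr {m : ℕ} {s s' t t' : ℕ → ℕ} (hs : ∀ i < m, s i = s' i)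
    (ht : ∀ i < m, t i = t' i) (h : pLe m s t) : pLe m s' t' := by
  rcases h with h | ⟨j, hj, hje, hjl⟩
  · exact Or.inl fun i hi => (hs i hi).symm.trans ((h i hi).trans (ht i hi))
  · exact Or.inr ⟨j, hj, fun i hi => (hs i (hi.trans hj)).symm.trans
      ((hje i hi).trans (ht i (hi.trans hj))),
      (hs j hj) ▸ (ht j hj) ▸ hjl⟩

lemma pLe_antisymm {m : ℕ} {s t : ℕ → ℕ} (h1 : pLe m s t) (h2 : pLe m t s) :
    ∀ i < m, s i = t i := by
  rcases h1 with h1 | ⟨j, hj, hje, hjl⟩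
  · exact h1
  · rcases h2 with h2 | ⟨k, hk, hke, hkl⟩
    · have := h2 j hj; omega
    · rcases lt_trichotomy j k with h | h | h
      · have := hke j h; omega
      · subst h; omega
      · have := hje k h; omega

lemma pLe_trans {m : ℕ} {s t u : ℕ → ℕ} (h1 : pLe m s t) (h2 : pLe m t u) :
    pLe m s u := by
  rcases h1 with h1 | ⟨j, hj, hje, hjl⟩
  · rcases h2 with h2 | ⟨k, hk, hke, hkl⟩
    · exact Or.inl fun i hi => (h1 i hi).trans (h2 i hi)
    · exact Or.inr ⟨k, hk, fun i hi => (h1 i (hi.trans hk)).trans (hke i hi),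
        (h1 k hk) ▸ hkl⟩
  · rcases h2 with h2 | ⟨k, hk, hke, hkl⟩
    · exact Or.inr ⟨j, hj, fun i hi => (hje i hi).trans (h2 i (hi.trans hj)),
        hjl.trans_le (le_of_eq (h2 j hj))⟩
    · rcases lt_trichotomy j k with h | h | h
      · exact Or.inr ⟨j, hj, fun i hi => (hje i hi).trans (hke i (hi.trans h)),
          hjl.trans_le (le_of_eq (hke j h))⟩
      · subst h; exact Or.inr ⟨j, hj, fun i hi => (hje i hi).trans (hke i hi), hjl.trans hkl⟩
      · exact Or.inr ⟨k, hk, fun i hi => (hje i (hi.trans h)).trans (hke i hi),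
          (hje k h) ▸ hkl⟩

lemma pLe_or_strict (m : ℕ) (s t : ℕ → ℕ) :
    pLe m s t ∨ ∃ j < m, (∀ i < j, s i = t i) ∧ t j < s j := by
  by_cases hall : ∀ i < m, s i = t i
  · exact Or.inl (Or.inl hall)
  · push_neg at hall
    obtain ⟨i₀, hi₀m, hi₀⟩ := hall
    have hex : ∃ i, s i ≠ t i := ⟨i₀, hi₀⟩
    have hjle : Nat.find hex ≤ i₀ := Nat.find_min' hex hi₀
    have hje : ∀ i < Nat.find hex, s i = t i := fun i hi =>
      not_not.mp (Nat.find_min hex hi)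
    rcases lt_trichotomy (s (Nat.find hex)) (t (Nat.find hex)) with h | h | h
    · exact Or.inl (Or.inr ⟨Nat.find hex, hjle.trans_lt hi₀m, hje, h⟩)
    · exact absurd h (Nat.find_spec hex)
    · exact Or.inr ⟨Nat.find hex, hjle.trans_lt hi₀m, hje, h⟩

lemma not_pLe {m : ℕ} {s t : ℕ → ℕ} (h : ¬ pLe m s t) :
    ∃ j < m, (∀ i < j, s i = t i) ∧ t j < s j :=
  (pLe_or_strict m s t).resolve_left h

lemma lexLe_pLe {s t : ℕ → ℕ} (h : lexLe s t) (m : ℕ) : pLe m s t := by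
  rcases h with rfl | ⟨k, hke, hkl⟩
  · exact pLe_refl m s
  · by_cases hk : k < m
    · exact Or.inr ⟨k, hk, hke, hkl⟩
    · exact Or.inl fun i hi => hke i (hi.trans_le (not_lt.mp hk))

/-! ### Basic properties of `F` and `Om` -/

lemma F_mem (α β x : ℝ) : F α β x ∈ Set.Ico (0:ℝ) 1 :=
  ⟨Int.fract_nonneg _, Int.fract_lt_one _⟩

lemma iter_mem (α β : ℝ) {x : ℝ} (hx : x ∈ Set.Ico (0:ℝ) 1) (n : ℕ) :
    (F α β)^[n] x ∈ Set.Ico (0:ℝ) 1 := by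
  cases n with
  | zero => exact hx
  | succ n => rw [Function.iterate_succ_apply']; exact F_mem α β _

lemma iter_nonneg (α β : ℝ) {x : ℝ} (hx : 0 ≤ x) (n : ℕ) : 0 ≤ (F α β)^[n] x := by
  cases n with
  | zero => exact hx
  | succ n => rw [Function.iterate_succ_apply']; exact Int.fract_nonneg _

lemma floor_nonneg' {α β : ℝ} (hα0 : 0 ≤ α) (hβ : 1 < β) {t : ℝ} (ht : 0 ≤ t) :
    (0:ℤ) ≤ ⌊β * t + α⌋ :=
  Int.floor_nonneg.mpr (by nlinarith)

lemma Om_cast {α β : ℝ} (hα0 : 0 ≤ α) (hβ : 1 < β) {x : ℝ} (hx : 0 ≤ x) (n : ℕ) :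
    ((Om α β x n : ℤ)) = ⌊β * ((F α β)^[n] x) + α⌋ :=
  Int.toNat_of_nonneg (floor_nonneg' hα0 hβ (iter_nonneg α β hx n))

lemma iter_succ' {α β : ℝ} (hα0 : 0 ≤ α) (hβ : 1 < β) {x : ℝ} (hx : 0 ≤ x) (n : ℕ) :
    (F α β)^[n+1] x = β * (F α β)^[n] x + α - (Om α β x n : ℝ) := by
  rw [Function.iterate_succ_apply']
  have h : ((Om α β x n : ℤ) : ℝ) = ((⌊β * ((F α β)^[n] x) + α⌋ : ℤ) : ℝ) := by
    rw [Om_cast hα0 hβ hx n]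
  push_cast at h
  rw [show F α β ((F α β)^[n] x) = β * ((F α β)^[n] x) + α - ⌊β * ((F α β)^[n] x) + α⌋ from rfl]
  rw [← h]

lemma iter_affine {α β : ℝ} (hα0 : 0 ≤ α) (hβ : 1 < β) {x y : ℝ}
    (hx : 0 ≤ x) (hy : 0 ≤ y) (k : ℕ) (h : ∀ i < k, Om α β x i = Om α β y i) :
    (F α β)^[k] y - (F α β)^[k] x = β^k * (y - x) := by
  induction k with
  | zero => simp
  | succ k ih =>
    have hk := ih (fun i hi => h i (hi.trans (Nat.lt_succ_self k)))
    rw [iter_succ' hα0 hβ hx k, iter_succ' hα0 hβ hy k, h k (Nat.lt_succ_self k)]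
    ring_nf
    ring_nf at hk
    nlinarith [hk]

lemma Om_mono {α β : ℝ} (hα0 : 0 ≤ α) (hβ : 1 < β) {x y : ℝ}
    (hx : 0 ≤ x) (hy : 0 ≤ y) (hxy : x ≤ y) (k : ℕ)
    (h : ∀ i < k, Om α β x i = Om α β y i) : Om α β x k ≤ Om α β y k := by
  have haff := iter_affine hα0 hβ hx hy k h
  have hβk : (0:ℝ) < β ^ k := pow_pos (by linarith) k
  have hle : (F α β)^[k] x ≤ (F α β)^[k] y := by nlinarith
  exact Int.toNat_le_toNat (Int.floor_le_floor (by nlinarith))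

lemma Om_pLe {α β : ℝ} (hα0 : 0 ≤ α) (hβ : 1 < β) {x y : ℝ}
    (hx : 0 ≤ x) (hy : 0 ≤ y) (hxy : x ≤ y) (m : ℕ) :
    pLe m (Om α β x) (Om α β y) := by
  by_cases hall : ∀ i < m, Om α β x i = Om α β y i
  · exact Or.inl hall
  · push_neg at hall
    obtain ⟨i₀, hi₀m, hi₀⟩ := hall
    have hex : ∃ i, Om α β x i ≠ Om α β y i := ⟨i₀, hi₀⟩
    have hje : ∀ i < Nat.find hex, Om α β x i = Om α β y i := fun i hi =>
      not_not.mp (Nat.find_min hex hi)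
    exact Or.inr ⟨Nat.find hex, (Nat.find_min' hex hi₀).trans_lt hi₀m, hje,
      lt_of_le_of_ne (Om_mono hα0 hβ hx hy hxy _ hje) (Nat.find_spec hex)⟩

lemma Om_le_ell {α β : ℝ} (hα0 : 0 ≤ α) (hβ : 1 < β) {x : ℝ}
    (hx : x ∈ Set.Ico (0:ℝ) 1) (n : ℕ) : Om α β x n ≤ ell α β := by
  have hmem := iter_mem α β hx n
  have h1 : β * ((F α β)^[n] x) + α < (⌈α+β⌉₊ : ℝ) := by
    have := Nat.le_ceil (α + β)
    nlinarith [hmem.1, hmem.2]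
  have h2 : ⌊β * ((F α β)^[n] x) + α⌋ < ((⌈α+β⌉₊ : ℕ) : ℤ) := by
    rw [Int.floor_lt]; push_cast; exact h1
  have h3 : 0 < ⌈α+β⌉₊ := Nat.ceil_pos.mpr (by linarith)
  unfold Om ell
  omega

lemma Om_shift (α β x : ℝ) (k i : ℕ) :
    Om α β x (k + i) = Om α β ((F α β)^[k] x) i := by
  unfold Om
  rw [add_comm k i, Function.iterate_add_apply]
lemma rig {α β : ℝ} (hα0 : 0 ≤ α) (hβ : 1 < β) {x : ℝ}
    (hx : x ∈ Set.Ico (0:ℝ) 1) (n : ℕ) :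
    ∃ δ : ℝ, 0 < δ ∧ x + δ ≤ 1 ∧ ∀ y, x ≤ y → y < x + δ →
      ∀ i < n, Om α β y i = Om α β x i := by
  induction n with
  | zero => exact ⟨1 - x, by linarith [hx.2], by linarith, fun y _ _ i hi => by omega⟩
  | succ n ih =>
    obtain ⟨δ, hδ0, hδ1, hd⟩ := ih
    set t := (F α β)^[n] x with ht_def
    have ht : t ∈ Set.Ico (0:ℝ) 1 := iter_mem α β hx n
    have hfl : β * t + α < ⌊β * t + α⌋ + 1 := Int.lt_floor_add_one _
    have hβ1 : (0:ℝ) < β ^ (n+1) := pow_pos (by linarith) _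
    set δ' := min δ (((⌊β * t + α⌋ : ℝ) + 1 - (β * t + α)) / β ^ (n+1)) with hδ'_def
    have hδ'0 : 0 < δ' := lt_min hδ0 (div_pos (by linarith) hβ1)
    have hδ'δ : δ' ≤ δ := min_le_left _ _
    refine ⟨δ', hδ'0, by linarith, fun y hxy hyδ i hi => ?_⟩
    have hyδδ : y < x + δ := by linarith
    have heq : ∀ i < n, Om α β y i = Om α β x i := hd y hxy hyδδ
    have hy0 : (0:ℝ) ≤ y := le_trans hx.1 hxy
    have hOmn : Om α β y n = Om α β x n := by
      have haff := iter_affine hα0 hβ hx.1 hy0 n (fun i hi => (heq i hi).symm)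
      have harg : β * ((F α β)^[n] y) + α = β * t + α + β^(n+1) * (y - x) := by
        rw [show (F α β)^[n] y = t + β^n * (y - x) by linarith [haff]]
        ring
      have hmono : β^(n+1) * (y - x) < (⌊β * t + α⌋ : ℝ) + 1 - (β * t + α) := by
        have h1 : y - x < δ' := by linarith
        have h2 : δ' ≤ ((⌊β * t + α⌋ : ℝ) + 1 - (β * t + α)) / β ^ (n+1) := min_le_right _ _
        have h3 := (le_div_iff₀ hβ1).mp h2
        nlinarith
      have hge : β^(n+1) * (y - x) ≥ 0 := by nlinarith
      have hfloor : ⌊β * ((F α β)^[n] y) + α⌋ = ⌊β * t + α⌋ := by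
        apply le_antisymm
        · have : β * ((F α β)^[n] y) + α < (⌊β * t + α⌋ : ℝ) + 1 := by
            rw [harg]; linarith
          have := Int.floor_lt.mpr (by push_cast; linarith : β * ((F α β)^[n] y) + α < ((⌊β * t + α⌋ + 1 : ℤ) : ℝ))
          omega
        · exact Int.floor_le_floor (by rw [harg]; linarith)
      unfold Om
      rw [hfloor]
    rcases Nat.lt_succ_iff_lt_or_eq.mp hi with hi' | hieq
    · exact heq _ hi'
    · rw [hieq]; exact hOmn

lemma near_one {α β : ℝ} (hα0 : 0 ≤ α) (hβ : 1 < β) {b : ℕ → ℕ}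
    (hb : b ∈ Sig α β) (hbsup : ∀ y ∈ Sig α β, lexLe y b) (m : ℕ) :
    ∃ y₀, y₀ ∈ Set.Ico (0:ℝ) 1 ∧ ∀ y, y₀ ≤ y → y < 1 → ∀ i < m, Om α β y i = b i := by
  have hU : IsOpen {s : ℕ → ℕ | ∀ i < m, s i = b i} := by
    have heq : {s : ℕ → ℕ | ∀ i < m, s i = b i}
        = ⋂ i ∈ Finset.range m, (fun s : ℕ → ℕ => s i) ⁻¹' {b i} := by
      ext s; simp [Finset.mem_range]
    rw [heq]
    exact isOpen_biInter_finset fun i _ =>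
      (isOpen_discrete _).preimage (continuous_apply i)
  have hmem := mem_closure_iff.mp hb _ hU (fun i _ => rfl)
  obtain ⟨s, hsU, x, hxIco, rfl⟩ := hmem
  refine ⟨x, hxIco, fun y hxy hy1 i him => ?_⟩
  have hy : y ∈ Set.Ico (0:ℝ) 1 := ⟨le_trans hxIco.1 hxy, hy1⟩
  have p2 : pLe m (Om α β x) (Om α β y) := Om_pLe hα0 hβ hxIco.1 hy.1 hxy m
  have p1 : pLe m (Om α β y) b :=
    lexLe_pLe (hbsup _ (subset_closure ⟨y, hy, rfl⟩)) m
  have p2' : pLe m b (Om α β y) :=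
    pLe_congr (fun i hi => hsU i hi) (fun _ _ => rfl) p2
  exact (pLe_antisymm p1 p2' i him)

lemma lang_iff_point (α β : ℝ) (w : List ℕ) :
    inLang α β w ↔ ∃ x ∈ Set.Ico (0:ℝ) 1, ∀ i < w.length, Om α β x i = w.getD i 0 := by
  constructor
  · rintro ⟨s, hs, hmatch⟩
    have hU : IsOpen {t : ℕ → ℕ | ∀ i < w.length, t i = w.getD i 0} := by
      have heq : {t : ℕ → ℕ | ∀ i < w.length, t i = w.getD i 0}
          = ⋂ i ∈ Finset.range w.length, (fun t : ℕ → ℕ => t i) ⁻¹' {w.getD i 0} := by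
        ext t; simp [Finset.mem_range]
      rw [heq]
      exact isOpen_biInter_finset fun i _ =>
        (isOpen_discrete _).preimage (continuous_apply i)
    have hsmem : s ∈ {t : ℕ → ℕ | ∀ i < w.length, t i = w.getD i 0} := by
      intro i hi
      rw [hmatch ⟨i, hi⟩]
      exact (List.getD_eq_getElem w 0 hi).symm ▸ (show w.get ⟨i, hi⟩ = w[i] from List.get_eq_getElem) ▸ rfl
    obtain ⟨t, htU, x, hxIco, rfl⟩ := mem_closure_iff.mp hs _ hU hsmem
    exact ⟨x, hxIco, htU⟩
  · rintro ⟨x, hxIco, hmatch⟩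
    refine ⟨Om α β x, subset_closure ⟨x, hxIco, rfl⟩, fun i => ?_⟩
    rw [hmatch i i.isLt, List.getD_eq_getElem w 0 i.isLt]
    simp [List.get_eq_getElem]
lemma exists_point_of_conds {α β : ℝ} (hα0 : 0 ≤ α) (hα1 : α < 1) (hβ : 1 < β)
    {b : ℕ → ℕ} (hb : b ∈ Sig α β) (hbsup : ∀ y ∈ Sig α β, lexLe y b)
    (n : ℕ) (W : ℕ → ℕ)
    (hC : ∀ k < n, pLe (n - k) (Om α β 0) (fun i => W (k + i)) ∧
        pLe (n - k) (fun i => W (k + i)) b) :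
    ∃ x ∈ Set.Ico (0:ℝ) 1, ∀ i < n, Om α β x i = W i := by
  rcases Nat.eq_zero_or_pos n with hn0 | hnpos
  · exact ⟨0, ⟨le_refl 0, by linarith⟩, by omega⟩
  by_contra hno
  push_neg at hno
  have h0Ico : (0:ℝ) ∈ Set.Ico (0:ℝ) 1 := ⟨le_refl 0, by linarith⟩
  set A : Set ℝ := {x | x ∈ Set.Ico (0:ℝ) 1 ∧ pLe n (Om α β x) W} with hA
  have hCa0 : pLe n (Om α β 0) W := by
    have h := (hC 0 hnpos).1
    rw [Nat.sub_zero] at h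
    exact pLe_congr (fun _ _ => rfl) (fun i _ => by rw [Nat.zero_add]) h
  have hCb0 : pLe n W b := by
    have h := (hC 0 hnpos).2
    rw [Nat.sub_zero] at h
    exact pLe_congr (fun i _ => by rw [Nat.zero_add]) (fun _ _ => rfl) h
  have h0A : (0:ℝ) ∈ A := ⟨h0Ico, hCa0⟩
  have hAne : A.Nonempty := ⟨0, h0A⟩
  have hAbdd : BddAbove A := ⟨1, fun x hx => le_of_lt hx.1.2⟩
  set X : ℝ := sSup A with hX
  have hXle1 : X ≤ 1 := csSup_le hAne (fun x hx => le_of_lt hx.1.2)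
  have hX0 : (0:ℝ) ≤ X := le_csSup hAbdd h0A
  rcases lt_or_eq_of_le hXle1 with hX1 | hX1
  · -- Case `X < 1`
    have hXIco : X ∈ Set.Ico (0:ℝ) 1 := ⟨hX0, hX1⟩
    have hXnA : X ∉ A := by
      intro hXA
      obtain ⟨δ, hδ0, hδ1, hd⟩ := rig hα0 hβ hXIco n
      have hyA : X + δ/2 ∈ A := by
        refine ⟨⟨by linarith, by linarith⟩, ?_⟩
        exact pLe_congr (fun i hi => (hd (X + δ/2) (by linarith) (by linarith) i hi).symm)
          (fun _ _ => rfl) hXA.2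
      have := le_csSup hAbdd hyA
      linarith
    have hXpos : (0:ℝ) < X := by
      rcases eq_or_lt_of_le hX0 with h | h
      · exact absurd (h ▸ h0A) hXnA
      · exact h
    have hbelow : ∀ x, 0 ≤ x → x < X → x ∈ A := by
      intro x hx0 hxX
      obtain ⟨y, hyA, hxy⟩ := exists_lt_of_lt_csSup hAne hxX
      exact ⟨⟨hx0, hxy.trans hyA.1.2⟩,
        pLe_trans (Om_pLe hα0 hβ hx0 hyA.1.1 (le_of_lt hxy) n) hyA.2⟩
    have hstab : ∀ m : ℕ, ∃ x₀, 0 ≤ x₀ ∧ x₀ < X ∧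
        ∀ x, x₀ ≤ x → x < X → ∀ i < m, Om α β x i = Om α β x₀ i := by
      intro m
      induction m with
      | zero => exact ⟨0, le_refl 0, hXpos, fun x _ _ i hi => by omega⟩
      | succ m ih =>
        obtain ⟨x₀, h0, h1, hstm⟩ := ih
        have hSne : ((fun x => Om α β x m) '' Set.Ico x₀ X).Nonempty :=
          ⟨Om α β x₀ m, x₀, ⟨le_refl _, h1⟩, rfl⟩
        have hSbdd : BddAbove ((fun x => Om α β x m) '' Set.Ico x₀ X) := by
          refine ⟨ell α β, ?_⟩
          rintro v ⟨x, hx, rfl⟩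
          exact Om_le_ell hα0 hβ ⟨le_trans h0 hx.1, lt_trans hx.2 hX1⟩ m
        obtain ⟨x₁, hx₁, hx₁eq0⟩ := Nat.sSup_mem hSne hSbdd
        have hx₁eq : Om α β x₁ m = sSup ((fun x => Om α β x m) '' Set.Ico x₀ X) := hx₁eq0
        refine ⟨x₁, le_trans h0 hx₁.1, hx₁.2, fun x hx1x hxX i hi => ?_⟩
        have hxi : ∀ i < m, Om α β x i = Om α β x₁ i := fun i hi =>
          (hstm x (le_trans hx₁.1 hx1x) hxX i hi).trans (hstm x₁ hx₁.1 hx₁.2 i hi).symm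
        rcases Nat.lt_succ_iff_lt_or_eq.mp hi with hi' | hieq
        · exact hxi i hi'
        · rw [hieq]
          have hle1 : Om α β x₁ m ≤ Om α β x m :=
            Om_mono hα0 hβ (le_trans h0 hx₁.1) (le_trans h0 (le_trans hx₁.1 hx1x)) hx1x m
              (fun i hi => (hxi i hi).symm)
          have hle2 : Om α β x m ≤ sSup ((fun x => Om α β x m) '' Set.Ico x₀ X) :=
            le_csSup hSbdd ⟨x, ⟨le_trans hx₁.1 hx1x, hxX⟩, rfl⟩
          omega
    obtain ⟨x₀, hx₀0, hx₀X, hst⟩ := hstab n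
    have hx₀A : x₀ ∈ A := hbelow x₀ hx₀0 hx₀X
    have hXnot : ¬ pLe n (Om α β X) W := fun h => hXnA ⟨hXIco, h⟩
    obtain ⟨jw, hjwn, hjweq, hjwlt⟩ := not_pLe hXnot
    have hdiff : ∃ i, Om α β x₀ i ≠ Om α β X i := by
      by_contra hcon
      push_neg at hcon
      exact hXnot (pLe_congr (fun i _ => hcon i) (fun _ _ => rfl) hx₀A.2)
    set j := Nat.find hdiff with hj
    have hjeq : ∀ i < j, Om α β x₀ i = Om α β X i := fun i hi =>
      not_not.mp (Nat.find_min hdiff hi)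
    have hjlt : Om α β x₀ j < Om α β X j :=
      lt_of_le_of_ne (Om_mono hα0 hβ hx₀0 hX0 (le_of_lt hx₀X) j hjeq) (Nat.find_spec hdiff)
    have hjn : j < n := by
      by_contra hjge
      push_neg at hjge
      exact hXnot (pLe_congr (fun i hi => hjeq i (lt_of_lt_of_le hi hjge))
        (fun _ _ => rfl) hx₀A.2)
    have haffX : ∀ x, x₀ ≤ x → x < X →
        (F α β)^[j] X - (F α β)^[j] x = β ^ j * (X - x) := fun x hx0x hxX =>
      iter_affine hα0 hβ (le_trans hx₀0 hx0x) hX0 j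
        (fun i hi => ((hst x hx0x hxX i (lt_trans hi hjn)).trans (hjeq i hi)))
    have hβ0 : (0:ℝ) < β := by linarith
    have hβj : (0:ℝ) < β^(j+1) := pow_pos hβ0 _
    have hfloorc : ⌊β * ((F α β)^[j] X) + α⌋ = (Om α β X j : ℤ) :=
      (Om_cast hα0 hβ hX0 j).symm
    have hkey : ∀ x, x₀ ≤ x → x < X →
        β * ((F α β)^[j] x) + α = (β * ((F α β)^[j] X) + α) - β^(j+1) * (X - x) ∧
        ⌊β * ((F α β)^[j] x) + α⌋ = (Om α β x₀ j : ℤ) := by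
      intro x hx0x hxX
      constructor
      · have h := haffX x hx0x hxX
        have hps : β^(j+1) = β^j * β := pow_succ β j
        nlinarith [h]
      · rw [← Om_cast hα0 hβ (le_trans hx₀0 hx0x) j, hst x hx0x hxX j hjn]
    have hcle : β * ((F α β)^[j] X) + α ≤ (Om α β x₀ j : ℝ) + 1 := by
      by_contra hgt
      push_neg at hgt
      set c := β * ((F α β)^[j] X) + α with hc
      set ε := c - ((Om α β x₀ j : ℝ) + 1) with hε
      have hε0 : 0 < ε := by simp only [hε]; linarith
      set x := max x₀ (X - ε/(2*β^(j+1))) with hxdef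
      have hxx₀ : x₀ ≤ x := le_max_left _ _
      have hxX : x < X := by
        apply max_lt hx₀X
        have : 0 < ε/(2*β^(j+1)) := by positivity
        linarith
      have hXx : X - x ≤ ε/(2*β^(j+1)) := by
        have := le_max_right x₀ (X - ε/(2*β^(j+1)))
        have hxge : X - ε/(2*β^(j+1)) ≤ x := this
        linarith
      obtain ⟨harg, hfl⟩ := hkey x hxx₀ hxX
      have hbig : (Om α β x₀ j : ℝ) + 1 ≤ β * ((F α β)^[j] x) + α := by
        rw [harg]
        have h2 : β^(j+1) * (X - x) ≤ ε/2 := by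
          have hXx0 : 0 ≤ X - x := by linarith
          calc β^(j+1) * (X - x) ≤ β^(j+1) * (ε/(2*β^(j+1))) := by
                apply mul_le_mul_of_nonneg_left hXx (le_of_lt hβj)
            _ = ε/2 := by field_simp
        linarith
      have hfl2 : (Om α β x₀ j : ℤ) + 1 ≤ ⌊β * ((F α β)^[j] x) + α⌋ :=
        Int.le_floor.mpr (by push_cast; linarith)
      omega
    have hcgeX : ((Om α β X j : ℤ) : ℝ) ≤ β * ((F α β)^[j] X) + α := by
      rw [← hfloorc]; exact Int.floor_le _
    have hjsucc : Om α β X j = Om α β x₀ j + 1 := by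
      have h1 : ((Om α β X j : ℕ) : ℝ) ≤ ((Om α β x₀ j : ℕ) : ℝ) + 1 := by
        push_cast at hcgeX ⊢
        linarith
      have h2 : (Om α β X j : ℕ) ≤ Om α β x₀ j + 1 := by exact_mod_cast h1
      omega
    have hceq : β * ((F α β)^[j] X) + α = (Om α β X j : ℝ) := by
      have h1 : ((Om α β X j : ℕ) : ℝ) = ((Om α β x₀ j : ℕ) : ℝ) + 1 := by
        rw [hjsucc]; push_cast; ring
      push_cast at hcgeX
      linarith [hcle, hcgeX]
    have hFX0 : (F α β)^[j+1] X = 0 := by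
      rw [iter_succ' hα0 hβ hX0 j]
      linarith [hceq]
    have htail_a : ∀ i, Om α β X (j+1+i) = Om α β 0 i := by
      intro i
      rw [Om_shift α β X (j+1) i, hFX0]
    have hFleft : ∀ x, x₀ ≤ x → x < X →
        (F α β)^[j+1] x = 1 - β^(j+1) * (X - x) := by
      intro x hx0x hxX
      obtain ⟨harg, hfl⟩ := hkey x hx0x hxX
      rw [iter_succ' hα0 hβ (le_trans hx₀0 hx0x) j, hst x hx0x hxX j hjn]
      have h1 : ((Om α β X j : ℕ) : ℝ) = ((Om α β x₀ j : ℕ) : ℝ) + 1 := by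
        rw [hjsucc]; push_cast; ring
      rw [harg]
      linarith [hceq]
    have htail_b : ∀ i, j+1+i < n → Om α β x₀ (j+1+i) = b i := by
      obtain ⟨y₀, hy₀Ico, hy₀⟩ := near_one hα0 hβ hb hbsup n
      set x := max x₀ (X - (1 - y₀)/(2*β^(j+1))) with hxdef
      have hy₀1 : y₀ < 1 := hy₀Ico.2
      have hxx₀ : x₀ ≤ x := le_max_left _ _
      have hxX : x < X := by
        apply max_lt hx₀X
        have : 0 < (1 - y₀)/(2*β^(j+1)) := div_pos (by linarith) (by positivity)
        linarith
      have hF1 : (F α β)^[j+1] x = 1 - β^(j+1)*(X-x) := hFleft x hxx₀ hxX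
      have hFge : y₀ ≤ (F α β)^[j+1] x := by
        have hxge : X - (1 - y₀)/(2*β^(j+1)) ≤ x := le_max_right _ _
        have hXx : X - x ≤ (1 - y₀)/(2*β^(j+1)) := by linarith
        have h2 : β^(j+1) * (X - x) ≤ (1 - y₀)/2 := by
          calc β^(j+1) * (X - x) ≤ β^(j+1) * ((1 - y₀)/(2*β^(j+1))) := by
                apply mul_le_mul_of_nonneg_left hXx (le_of_lt hβj)
            _ = (1 - y₀)/2 := by field_simp
        rw [hF1]
        linarith
      have hFlt : (F α β)^[j+1] x < 1 := by
        rw [Function.iterate_succ_apply']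
        exact (F_mem α β _).2
      intro i hi
      have h1 : Om α β x (j+1+i) = b i := by
        rw [Om_shift]
        exact hy₀ _ hFge hFlt i (by omega)
      exact (hst x hxx₀ hxX _ hi).symm.trans h1
    -- Final contradiction
    rcases hx₀A.2 with heqW | ⟨k, hkn, hkeq, hklt⟩
    · obtain ⟨i, hi, hne⟩ := hno x₀ ⟨hx₀0, lt_trans hx₀X hX1⟩
      exact hne (heqW i hi)
    · rcases lt_trichotomy jw j with hcmp | hcmp | hcmp
      · -- jw < j
        have h1 : Om α β x₀ jw = Om α β X jw := hjeq jw hcmp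
        rcases lt_trichotomy k jw with h | h | h
        · have h2 := hjweq k h
          have h3 := hjeq k (lt_trans h hcmp)
          omega
        · subst h; omega
        · have h4 := hkeq jw h
          omega
      · -- jw = j
        rw [hcmp] at hjweq hjwlt
        have hkgt : j < k := by
          rcases lt_trichotomy k j with h | h | h
          · have h2 := hjweq k h
            have h3 := hjeq k h
            omega
          · subst h; omega
          · exact h
        have hj1n : j + 1 < n := by omega
        have hCb := (hC (j+1) hj1n).2
        have hpn : k - (j+1) < n - (j+1) := by omega
        have hWp : b (k - (j+1)) < W (j+1+(k - (j+1))) := by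
          have h2 := htail_b (k - (j+1)) (by omega)
          rw [show j+1+(k-(j+1)) = k by omega] at h2 ⊢
          omega
        rcases hCb with hE | ⟨q, hq, hqe, hql⟩
        · have hE' : W (j+1+(k - (j+1))) = b (k - (j+1)) := hE (k - (j+1)) hpn
          omega
        · have hql' : W (j+1+q) < b q := hql
          rcases lt_trichotomy q (k - (j+1)) with h | h | h
          · have hw1 : Om α β x₀ (j+1+q) = W (j+1+q) := hkeq (j+1+q) (by omega)
            have hw2 : Om α β x₀ (j+1+q) = b q := htail_b q (by omega)
            omega
          · subst h
            omega
          · have hqe' : W (j+1+(k - (j+1))) = b (k - (j+1)) := hqe (k - (j+1)) h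
            omega
      · -- j < jw
        have hkj : k = j := by
          rcases lt_trichotomy k j with h | h | h
          · exfalso
            have h2 := hjweq k (by omega)
            have h3 := hjeq k h
            omega
          · exact h
          · exfalso
            have h4 := hkeq j h
            have h5 := hjweq j hcmp
            omega
        have hj1n : j + 1 < n := by omega
        have hCa := (hC (j+1) hj1n).1
        have hpn : jw - (j+1) < n - (j+1) := by omega
        have hWpa : W jw < Om α β 0 (jw - (j+1)) := by
          have h2 := htail_a (jw - (j+1))
          rw [show j+1+(jw-(j+1)) = jw by omega] at h2
          omega
        rcases hCa with hE | ⟨q, hq, hqe, hql⟩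
        · have hE' : Om α β 0 (jw - (j+1)) = W (j+1+(jw - (j+1))) := hE (jw - (j+1)) hpn
          rw [show j+1+(jw-(j+1)) = jw by omega] at hE'
          omega
        · have hql' : Om α β 0 q < W (j+1+q) := hql
          rcases lt_trichotomy q (jw - (j+1)) with h | h | h
          · have hw1 : Om α β X (j+1+q) = W (j+1+q) := hjweq (j+1+q) (by omega)
            have hw2 : Om α β X (j+1+q) = Om α β 0 q := htail_a q
            omega
          · subst h
            rw [show j+1+(jw-(j+1)) = jw by omega] at hql'
            omega
          · have hqe' : Om α β 0 (jw - (j+1)) = W (j+1+(jw - (j+1))) := hqe (jw - (j+1)) h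
            rw [show j+1+(jw-(j+1)) = jw by omega] at hqe'
            omega
  · -- Case `X = 1`
    obtain ⟨y₀, hy₀Ico, hy₀⟩ := near_one hα0 hβ hb hbsup n
    obtain ⟨y, hyA, hy₀y⟩ := exists_lt_of_lt_csSup hAne (lt_of_lt_of_le hy₀Ico.2 (le_of_eq hX1.symm))
    have hyb : ∀ i < n, Om α β y i = b i := hy₀ y (le_of_lt hy₀y) hyA.1.2
    have h1 : pLe n b W := pLe_congr (fun i hi => hyb i hi) (fun _ _ => rfl) hyA.2
    have heq := pLe_antisymm hCb0 h1
    obtain ⟨i, hi, hne⟩ := hno y hyA.1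
    exact hne (by rw [hyb i hi, ← heq i hi])
lemma length_pre (s : ℕ → ℕ) (m : ℕ) : (pre s m).length = m := by
  unfold pre; simp

lemma getD_pre (s : ℕ → ℕ) (m i : ℕ) (hi : i < m) : (pre s m).getD i 0 = s i := by
  unfold pre
  rw [List.getD_eq_getElem _ 0 (by simpa using hi)]
  simp

lemma getD_drop (w : List ℕ) (k i : ℕ) (hi : i < w.length - k) :
    (w.drop k).getD i 0 = w.getD (k+i) 0 := by
  rw [List.getD_eq_getElem _ 0 (by simp; omega), List.getD_eq_getElem _ 0 (by omega)]
  simp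

lemma wordLe_iff {u v : List ℕ} (h : u.length = v.length) :
    wordLe u v ↔ pLe u.length (fun i => u.getD i 0) (fun i => v.getD i 0) := by
  constructor
  · rintro (rfl | ⟨k, hke, hkl⟩)
    · exact pLe_refl _ _
    · by_cases hk : k < u.length
      · exact Or.inr ⟨k, hk, fun i hi => hke i hi, hkl⟩
      · exfalso
        rw [List.getD_eq_default _ _ (by omega), List.getD_eq_default _ _ (by omega)] at hkl
        omega
  · rintro (he | ⟨j, hj, hje, hjl⟩)
    · left
      apply List.ext_getElem h
      intro i h1 h2
      have h3 : u.getD i 0 = v.getD i 0 := he i h1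
      rwa [List.getD_eq_getElem u 0 h1, List.getD_eq_getElem v 0 h2] at h3
    · exact Or.inr ⟨j, hje, hjl⟩
/-- **Corollary (lexicographic description of the language).** For `0 ≤ α < 1` and
`β > 1`, a word `w` over `{0,…,ℓ}` belongs to `𝓛` if and only if
`(a_1,…,a_{n-k+1}) ⪯ (w_k,…,w_n) ⪯ (b_1,…,b_{n-k+1})` for every `k ∈ {1,…,n}`. -/
theorem mem_lang_iff_lex (α β : ℝ) (hα0 : 0 ≤ α) (hα1 : α < 1) (hβ : 1 < β)
    (b : ℕ → ℕ) (hb : b ∈ Sig α β) (hbsup : ∀ y ∈ Sig α β, lexLe y b)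
    (w : List ℕ) (hw : ∀ c ∈ w, c ≤ ell α β) :
    inLang α β w ↔
      ∀ k < w.length,
        wordLe (pre (Om α β 0) (w.length - k)) (w.drop k) ∧
        wordLe (w.drop k) (pre b (w.length - k)) := by
  rw [lang_iff_point]
  constructor
  · rintro ⟨x, hxIco, hpre⟩ k hk
    have hy : (F α β)^[k] x ∈ Set.Ico (0:ℝ) 1 := iter_mem α β hxIco k
    have hsh : ∀ i < w.length - k, Om α β ((F α β)^[k] x) i = w.getD (k+i) 0 := by
      intro i hi
      rw [← Om_shift]
      exact hpre (k+i) (by omega)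
    constructor
    · have hp : pLe (w.length - k) (Om α β 0) (Om α β ((F α β)^[k] x)) :=
        Om_pLe hα0 hβ (le_refl 0) hy.1 hy.1 _
      have hp2 : pLe (w.length - k) (Om α β 0) (fun i => w.getD (k+i) 0) :=
        pLe_congr (fun _ _ => rfl) (fun i hi => hsh i hi) hp
      rw [wordLe_iff (by rw [length_pre, List.length_drop]), length_pre]
      exact pLe_congr (fun i hi => (getD_pre _ _ i hi).symm)
        (fun i hi => (getD_drop w k i hi).symm) hp2
    · have hp : pLe (w.length - k) (Om α β ((F α β)^[k] x)) b :=
        lexLe_pLe (hbsup _ (subset_closure ⟨_, hy, rfl⟩)) _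
      have hp2 : pLe (w.length - k) (fun i => w.getD (k+i) 0) b :=
        pLe_congr (fun i hi => hsh i hi) (fun _ _ => rfl) hp
      rw [wordLe_iff (by rw [length_pre, List.length_drop]), List.length_drop]
      exact pLe_congr (fun i hi => (getD_drop w k i hi).symm)
        (fun i hi => (getD_pre _ _ i hi).symm) hp2
  · intro hcond
    apply exists_point_of_conds hα0 hα1 hβ hb hbsup w.length (fun i => w.getD i 0)
    intro k hk
    obtain ⟨h1, h2⟩ := hcond k hk
    rw [wordLe_iff (by rw [length_pre, List.length_drop]), length_pre] at h1
    rw [wordLe_iff (by rw [length_pre, List.length_drop]), List.length_drop] at h2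
    constructor
    · exact pLe_congr (fun i hi => getD_pre _ _ i hi)
        (fun i hi => getD_drop w k i hi) h1
    · exact pLe_congr (fun i hi => getD_drop w k i hi)
        (fun i hi => getD_pre _ _ i hi) h2

end IntermediateBeta
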